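/- Containment of resonant neighbourhoods: for q ∈ 𝔽[X]^m with k^{N−1} ≤ ‖q‖_∞ < k^{N+1} and any ε > 0, the set B(q;ε) = {A ∈ U : ‖qA‖ < ε} is contained in the ε·k^{−N+1}-neighbourhood of the union over p ∈ 𝔽[X]^n of the affine subspaces H(q,p) = {A ∈ U : qA = p}; that is, B(q;ε) ⊆ {A ∈ U : dist(A, ∪_p H(q,p)) < ε k^{−N+1}}. -/

import Mathlib

open Polynomial MeasureTheory Filter Set
open scoped Classical

noncomputable section

namespace FFapprox

variable {F : Type*} [Field F] [Fintype F]

/-- The absolute value on `𝔽((X⁻¹))`, modelled as `LaurentSeries F` in the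
variable `T = X⁻¹`: `|f| = k^(deg_X f) = k^(-order_T f)`. -/
def fabs (f : LaurentSeries F) : ℝ :=
  if f = 0 then 0 else (Fintype.card F : ℝ) ^ (-f.order)

lemma fabs_nonneg (f : LaurentSeries F) : 0 ≤ fabs f := by
  unfold fabs; split
  · exact le_refl 0
  · positivity

lemma one_le_cardF : (1 : ℝ) ≤ (Fintype.card F : ℝ) := by
  exact_mod_cast Fintype.card_pos

lemma fabs_zero : fabs (0 : LaurentSeries F) = 0 := if_pos rfl

lemma fabs_neg (f : LaurentSeries F) : fabs (-f) = fabs f := by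
  unfold fabs
  rw [HahnSeries.order_neg, neg_eq_zero]

lemma fabs_add_le (f g : LaurentSeries F) :
    fabs (f + g) ≤ max (fabs f) (fabs g) := by
  rcases eq_or_ne f 0 with rfl | hf
  · simp [fabs_zero, le_max_iff, le_refl]
  rcases eq_or_ne g 0 with rfl | hg
  · simp [fabs_zero, le_max_iff, le_refl]
  rcases eq_or_ne (f + g) 0 with hfg | hfg
  · rw [hfg, fabs_zero]
    exact le_max_of_le_left (fabs_nonneg f)
  have horder := HahnSeries.min_order_le_order_add hfg
  unfold fabs
  rw [if_neg hf, if_neg hg, if_neg hfg, le_max_iff]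
  rcases min_le_iff.mp (le_refl (min f.order g.order)) with h | h
  · rcases le_or_gt f.order g.order with hle | hlt
    · left
      refine zpow_le_zpow_right₀ one_le_cardF ?_
      simp only [neg_le_neg_iff]
      exact le_trans (by simp [min_eq_left hle]) horder
    · right
      refine zpow_le_zpow_right₀ one_le_cardF ?_
      simp only [neg_le_neg_iff]
      exact le_trans (by simp [min_eq_right hlt.le]) horder
  · rcases le_or_gt f.order g.order with hle | hlt
    · left
      refine zpow_le_zpow_right₀ one_le_cardF ?_
      simp only [neg_le_neg_iff]
      exact le_trans (by simp [min_eq_left hle]) horder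
    · right
      refine zpow_le_zpow_right₀ one_le_cardF ?_
      simp only [neg_le_neg_iff]
      exact le_trans (by simp [min_eq_right hlt.le]) horder

instance : MetricSpace (LaurentSeries F) where
  dist f g := fabs (f - g)
  dist_self f := by simp [fabs_zero]
  dist_comm f g := by
    have : g - f = -(f - g) := by ring
    try simp only []
    rw [this, fabs_neg]
  dist_triangle f g h := by
    have : f - h = (f - g) + (g - h) := by ring
    try simp only []
    rw [this]
    refine le_trans (fabs_add_le _ _) ?_
    rw [max_le_iff]
    constructor
    · exact le_add_of_nonneg_right (fabs_nonneg _)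
    · exact le_add_of_nonneg_left (fabs_nonneg _)
  eq_of_dist_eq_zero := by
    intro f g hfg
    by_contra hne
    have hsub : f - g ≠ 0 := sub_ne_zero.mpr hne
    try simp only [] at hfg
    unfold fabs at hfg
    rw [if_neg hsub] at hfg
    have : (0:ℝ) < (Fintype.card F : ℝ) ^ (-(f-g).order) := by positivity
    linarith

instance : MeasurableSpace (LaurentSeries F) := borel _

instance : BorelSpace (LaurentSeries F) := ⟨rfl⟩

/-- The embedding of `𝔽[X]` into `𝔽((X⁻¹))`, sending `X` to `T⁻¹`. -/
def pe : Polynomial F →ₐ[F] LaurentSeries F :=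
  Polynomial.aeval (HahnSeries.single (-1 : ℤ) (1 : F))

/-- `|q| = k^(deg q)` on polynomials. -/
def pabs (q : Polynomial F) : ℝ :=
  if q = 0 then 0 else (Fintype.card F : ℝ) ^ q.natDegree

/-- sup-norm of a polynomial vector. -/
def qnorm {m : ℕ} (q : Fin m → Polynomial F) : ℝ := ⨆ i, pabs (q i)

/-- sup-norm of a vector of Laurent series. -/
def vnorm {n : ℕ} (v : Fin n → LaurentSeries F) : ℝ := ⨆ i, fabs (v i)

/-- sup-norm of a matrix. -/
def mnorm {m n : ℕ} (A : Fin m → Fin n → LaurentSeries F) : ℝ := ⨆ i, vnorm (A i)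

/-- Distance of a vector to the nearest polynomial vector. -/
def pdist {n : ℕ} (v : Fin n → LaurentSeries F) : ℝ :=
  ⨅ p : Fin n → Polynomial F, vnorm (fun i => v i - pe (p i))

/-- matrix product `q A` of a polynomial row vector with a Laurent-series matrix. -/
def mulVec {m n : ℕ} (q : Fin m → Polynomial F) (A : Fin m → Fin n → LaurentSeries F) :
    Fin n → LaurentSeries F :=
  fun j => ∑ i, pe (q i) * A i j

/-- The unit cube in the space of `m × n` matrices. -/
def U (F : Type*) [Field F] [Fintype F] (m n : ℕ) : Set (Fin m → Fin n → LaurentSeries F) :=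
  {A | ∀ i j, fabs (A i j) < 1}

/-- The exponent of convergence `v(S)`. -/
def expConv {m : ℕ} (S : Set (Fin m → Polynomial F)) : ℝ :=
  sInf {v : ℝ | Summable fun q : S => qnorm (q : Fin m → Polynomial F) ^ (-v)}

/-- The set `W_S(m,n;ψ)`. -/
def WS {m n : ℕ} (S : Set (Fin m → Polynomial F))
    (ψ : (Fin m → Polynomial F) → ℝ) : Set (Fin m → Fin n → LaurentSeries F) :=
  {A | {q ∈ S | pdist (mulVec q A) < ψ q}.Infinite}


open scoped ENNReal NNReal

/-- The polynomial Euler totient `Φ(q)`. -/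
def Phi (q : Polynomial F) : ℕ :=
  Nat.card {q' : Polynomial F // pabs q' < pabs q ∧ q'.Monic ∧ IsCoprime q q'}

/-- The unit cube in `𝔽((X⁻¹))ⁿ`. -/
def U1 (F : Type*) [Field F] [Fintype F] (n : ℕ) : Set (Fin n → LaurentSeries F) :=
  {A | ∀ i, fabs (A i) < 1}

/-- `B(q,ε) = {A ∈ U : ‖qA‖ < ε}`. -/
def BallB {m n : ℕ} (q : Fin m → Polynomial F) (ε : ℝ) :
    Set (Fin m → Fin n → LaurentSeries F) :=
  {A ∈ U F m n | pdist (mulVec q A) < ε}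

/-- `B'(q,ε)` (one-dimensional case, with coprimality). -/
def BallB' {n : ℕ} (q : Polynomial F) (ε : ℝ) : Set (Fin n → LaurentSeries F) :=
  {A ∈ U1 F n | ∃ p : Fin n → Polynomial F, (∀ i, IsCoprime q (p i)) ∧
    vnorm (fun i => pe q * A i - pe (p i)) < ε}

/-- gcd of the coordinates of a polynomial vector. -/
def gcdv {m : ℕ} (q : Fin m → Polynomial F) : Polynomial F := Finset.univ.gcd q

/-- `B''(q,ε)` (higher-dimensional case, with coprimality to the gcd of coordinates). -/
def BallB'' {m n : ℕ} (q : Fin m → Polynomial F) (ε : ℝ) :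
    Set (Fin m → Fin n → LaurentSeries F) :=
  {A ∈ U F m n | ∃ p : Fin n → Polynomial F, (∀ j, IsCoprime (gcdv q) (p j)) ∧
    vnorm (fun j => mulVec q A j - pe (p j)) < ε}

/-- The resonant affine subspace `H(q,p) = {A ∈ U : qA = p}`. -/
def Hqp {m n : ℕ} (q : Fin m → Polynomial F) (p : Fin n → Polynomial F) :
    Set (Fin m → Fin n → LaurentSeries F) :=
  {A ∈ U F m n | mulVec q A = fun j => pe (p j)}

/-- The counting function `C(N;S)`. -/
def CountS {m : ℕ} (S : Set (Fin m → Polynomial F)) (N : ℕ) : ℕ :=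
  Nat.card {q : Fin m → Polynomial F // q ∈ S ∧ qnorm q ≤ N}

/-- The growth exponent `γ(S)`. -/
def gammaS {m : ℕ} (S : Set (Fin m → Polynomial F)) : ℝ :=
  sSup {γ : ℝ | 0 < Filter.atTop.limsup (fun N : ℕ => (CountS S N : ℝ≥0∞) * (N : ℝ≥0∞) ^ (-γ))}

/-- The exponent `η(ψ)`. -/
def etaExp {m : ℕ} (n : ℕ) (ψ : (Fin m → Polynomial F) → ℝ) : ℝ :=
  sInf {η : ℝ | Summable (fun q : Fin m → Polynomial F => qnorm q ^ n * (ψ q / qnorm q) ^ η)}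

/-- The exponent of convergence of `S ⊆ 𝔽[X]` (one-dimensional). -/
def expConv1 (S : Set (Polynomial F)) : ℝ :=
  sInf {v : ℝ | Summable fun q : S => pabs (q : Polynomial F) ^ (-v)}


/-! ### Auxiliary lemmas for Statement 16 -/

lemma cardF_pos : (0 : ℝ) < (Fintype.card F : ℝ) := by
  exact_mod_cast Fintype.card_pos

lemma one_lt_cardF : (1 : ℝ) < (Fintype.card F : ℝ) := by
  exact_mod_cast Fintype.one_lt_card

lemma fabs_pos {f : LaurentSeries F} (hf : f ≠ 0) : 0 < fabs f := by
  unfold fabs; rw [if_neg hf]; positivity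

lemma ldist_eq (f g : LaurentSeries F) : dist f g = fabs (f - g) := rfl

lemma fabs_sub_le (f g : LaurentSeries F) :
    fabs (f - g) ≤ max (fabs f) (fabs g) := by
  have := fabs_add_le f (-g)
  simpa only [sub_eq_add_neg, fabs_neg] using this

lemma fabs_mul (f g : LaurentSeries F) : fabs (f * g) = fabs f * fabs g := by
  rcases eq_or_ne f 0 with rfl | hf
  · simp [fabs_zero]
  rcases eq_or_ne g 0 with rfl | hg
  · simp [fabs_zero]
  have hfg : f * g ≠ 0 := mul_ne_zero hf hg
  unfold fabs
  rw [if_neg hf, if_neg hg, if_neg hfg, HahnSeries.order_mul hf hg, neg_add,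
    zpow_add₀ (ne_of_gt (cardF_pos (F := F)))]

lemma fabs_one : fabs (1 : LaurentSeries F) = 1 := by
  unfold fabs
  rw [if_neg one_ne_zero, HahnSeries.order_one]
  simp

lemma fabs_inv (f : LaurentSeries F) : fabs f⁻¹ = (fabs f)⁻¹ := by
  rcases eq_or_ne f 0 with rfl | hf
  · simp [fabs_zero]
  have h : fabs f * fabs f⁻¹ = 1 := by
    rw [← fabs_mul, mul_inv_cancel₀ hf, fabs_one]
  have hpos := fabs_pos hf
  field_simp at h ⊢
  linarith [h]

lemma pabs_nonneg (q : Polynomial F) : 0 ≤ pabs q := by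
  unfold pabs; split
  · exact le_refl 0
  · positivity

lemma one_le_pabs {q : Polynomial F} (hq : q ≠ 0) : 1 ≤ pabs q := by
  unfold pabs
  rw [if_neg hq]
  exact one_le_pow₀ (le_of_lt one_lt_cardF)

lemma coeff_finsetSum {α : Type*} (s : Finset α) (g : α → LaurentSeries F) (e : ℤ) :
    (∑ d ∈ s, g d).coeff e = ∑ d ∈ s, (g d).coeff e := by
  classical
  induction s using Finset.induction_on with
  | empty => simp
  | insert a s h ih => rw [Finset.sum_insert h, Finset.sum_insert h, HahnSeries.coeff_add, ih]

lemma pe_monomial (k : ℕ) (a : F) :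
    pe (Polynomial.monomial k a) = HahnSeries.single (-(k : ℤ)) a := by
  unfold pe
  rw [Polynomial.aeval_monomial, HahnSeries.single_pow, HahnSeries.algebraMap_apply',
    PowerSeries.algebraMap_apply, Algebra.algebraMap_self_apply, HahnSeries.ofPowerSeries_C,
    HahnSeries.C_apply, HahnSeries.single_mul_single]
  simp

lemma pe_coeff (q : Polynomial F) (e : ℤ) :
    (pe q).coeff e = if e ≤ 0 then q.coeff (-e).toNat else 0 := by
  induction q using Polynomial.induction_on' with
  | add p r hp hr =>
    rw [map_add, HahnSeries.coeff_add, hp, hr, Polynomial.coeff_add]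
    split <;> simp
  | monomial k a =>
    rw [pe_monomial, HahnSeries.coeff_single, Polynomial.coeff_monomial]
    by_cases h : e = -(k : ℤ)
    · subst h; simp
    · rw [if_neg h]
      split
      · rw [if_neg]; intro hk; apply h; omega
      · rfl

lemma pe_ne_zero {q : Polynomial F} (hq : q ≠ 0) : pe q ≠ 0 := by
  intro h
  have h2 := pe_coeff q (-(q.natDegree : ℤ))
  rw [h] at h2
  simp only [HahnSeries.coeff_zero, neg_nonpos, Nat.cast_nonneg, if_true, neg_neg,
    Int.toNat_natCast] at h2
  exact Polynomial.leadingCoeff_ne_zero.mpr hq h2.symm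

lemma order_pe {q : Polynomial F} (hq : q ≠ 0) : (pe q).order = -(q.natDegree : ℤ) := by
  have hco : (pe q).coeff (-(q.natDegree : ℤ)) ≠ 0 := by
    rw [pe_coeff]
    simpa using Polynomial.leadingCoeff_ne_zero.mpr hq
  refine le_antisymm (HahnSeries.order_le_of_coeff_ne_zero hco) ?_
  by_contra hlt
  push_neg at hlt
  have h0 : (pe q).coeff (pe q).order ≠ 0 := HahnSeries.coeff_order_eq_zero.not.mpr (pe_ne_zero hq)
  apply h0
  rw [pe_coeff]
  split_ifs with h
  · exact Polynomial.coeff_eq_zero_of_natDegree_lt (by omega)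
  · rfl

lemma fabs_pe (q : Polynomial F) : fabs (pe q) = pabs q := by
  rcases eq_or_ne q 0 with rfl | hq
  · rw [map_zero, fabs_zero]; simp [pabs]
  · unfold fabs pabs
    rw [if_neg (pe_ne_zero hq), if_neg hq, order_pe hq, neg_neg, zpow_natCast]

/-- Truncation: every Laurent series is within distance `< 1` of a polynomial. -/
lemma exists_trunc (f : LaurentSeries F) : ∃ r : Polynomial F, fabs (f - pe r) < 1 := by
  classical
  rcases eq_or_ne f 0 with rfl | hf
  · exact ⟨0, by simpa [fabs_zero] using zero_lt_one⟩
  have hfin : (f.support ∩ Set.Iic (0 : ℤ)).Finite := by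
    refine (Set.finite_Icc f.order 0).subset ?_
    rintro x ⟨hx1, hx2⟩
    refine ⟨?_, hx2⟩
    by_contra hlt
    push_neg at hlt
    exact hx1 (HahnSeries.coeff_eq_zero_of_lt_order hlt)
  set s := hfin.toFinset with hs
  refine ⟨∑ d ∈ s, Polynomial.C (f.coeff d) * Polynomial.X ^ (-d).toNat, ?_⟩
  have hpe : pe (∑ d ∈ s, Polynomial.C (f.coeff d) * Polynomial.X ^ (-d).toNat)
      = ∑ d ∈ s, HahnSeries.single d (f.coeff d) := by
    rw [map_sum]
    refine Finset.sum_congr rfl fun d hd => ?_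
    have hd0 : d ≤ 0 := (hfin.mem_toFinset.mp hd).2
    have : Polynomial.C (f.coeff d) * Polynomial.X ^ (-d).toNat
        = Polynomial.monomial (-d).toNat (f.coeff d) := by
      rw [Polynomial.C_mul_X_pow_eq_monomial]
    have hd' : (-(((-d).toNat : ℕ) : ℤ)) = d := by omega
    rw [this, pe_monomial, hd']
  rw [hpe]
  have hcoeff : ∀ e : ℤ, e ≤ 0 →
      (f - ∑ d ∈ s, HahnSeries.single d (f.coeff d)).coeff e = 0 := by
    intro e he
    rw [HahnSeries.coeff_sub, coeff_finsetSum]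
    by_cases hmem : e ∈ s
    · rw [Finset.sum_eq_single e (fun b _ hb => HahnSeries.coeff_single_of_ne (by omega))
        (fun h => absurd hmem h), HahnSeries.coeff_single_same, sub_self]
    · have he0 : f.coeff e = 0 := by
        by_contra hne
        exact hmem (hfin.mem_toFinset.mpr ⟨hne, he⟩)
      rw [he0, Finset.sum_eq_zero, sub_zero]
      intro b hb
      refine HahnSeries.coeff_single_of_ne fun heq => ?_
      rw [heq] at hmem
      exact hmem hb
  set g := f - ∑ d ∈ s, HahnSeries.single d (f.coeff d) with hg
  rcases eq_or_ne g 0 with h0 | h0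
  · rw [h0, fabs_zero]; exact zero_lt_one
  have hord : 0 < g.order := by
    by_contra hle
    push_neg at hle
    exact HahnSeries.coeff_order_eq_zero.not.mpr h0 (hcoeff g.order hle)
  unfold fabs
  rw [if_neg h0]
  calc (Fintype.card F : ℝ) ^ (-g.order) < (Fintype.card F : ℝ) ^ (0 : ℤ) :=
        zpow_lt_zpow_right₀ one_lt_cardF (by omega)
    _ = 1 := zpow_zero _

/-- Given `fabs δ < ε`, find a polynomial `r` with `fabs (δ - pe r) < ε` and `< 1`. -/
lemma exists_good (δ : LaurentSeries F) {ε : ℝ} (hδ : fabs δ < ε) :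
    ∃ r : Polynomial F, fabs (δ - pe r) < ε ∧ fabs (δ - pe r) < 1 := by
  obtain ⟨r, hr⟩ := exists_trunc δ
  rcases le_or_gt 1 (fabs δ) with h1 | h1
  · exact ⟨r, lt_of_lt_of_le hr (le_trans h1 (le_of_lt hδ)), hr⟩
  · refine ⟨0, ?_, ?_⟩ <;> rw [map_zero, sub_zero] <;> assumption

lemma exists_qnorm_eq {m : ℕ} (hm : 0 < m) (q : Fin m → Polynomial F) :
    ∃ i, qnorm q = pabs (q i) ∧ ∀ j, pabs (q j) ≤ pabs (q i) := by
  have : Nonempty (Fin m) := ⟨⟨0, hm⟩⟩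
  obtain ⟨i, hi⟩ := Finite.exists_max (fun i => pabs (q i))
  refine ⟨i, ?_, hi⟩
  unfold qnorm
  exact le_antisymm (ciSup_le hi) (le_ciSup (f := fun j => pabs (q j)) (Set.finite_range _).bddAbove i)

/-- `B(q;ε)` is contained in the `ε k^{-N+1}`-neighbourhood of `⋃_p H(q,p)`. -/
theorem ball_subset_nbhd {m n : ℕ} (hm : 0 < m) (hn : 0 < n)
    (q : Fin m → Polynomial F) (N : ℕ)
    (h1 : (Fintype.card F : ℝ) ^ ((N : ℤ) - 1) ≤ qnorm q)
    (h2 : qnorm q < (Fintype.card F : ℝ) ^ ((N : ℤ) + 1))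
    (ε : ℝ) (hε : 0 < ε) :
    BallB (n := n) q ε ⊆ {A ∈ U F m n |
      Metric.infDist A (⋃ p : Fin n → Polynomial F, Hqp q p) <
        ε * (Fintype.card F : ℝ) ^ (-(N : ℤ) + 1)} := by
  rintro A ⟨hAU, hApd⟩
  refine ⟨hAU, ?_⟩
  obtain ⟨i₀, hqn, hmax⟩ := exists_qnorm_eq hm q
  have hqlow : (Fintype.card F : ℝ) ^ ((N : ℤ) - 1) ≤ pabs (q i₀) := hqn ▸ h1
  have hq0 : q i₀ ≠ 0 := by
    intro h
    rw [h] at hqlow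
    simp only [pabs, if_pos rfl] at hqlow
    exact absurd hqlow (not_le.mpr (zpow_pos (cardF_pos (F := F)) _))
  have h1pabs : 1 ≤ pabs (q i₀) := one_le_pabs hq0
  have hpabs_pos : 0 < pabs (q i₀) := lt_of_lt_of_le one_pos h1pabs
  -- pick an approximating polynomial vector
  unfold pdist at hApd
  obtain ⟨p₀, hp₀⟩ := exists_lt_of_ciInf_lt hApd
  unfold vnorm at hp₀
  have hcomp : ∀ j, fabs (mulVec q A j - pe (p₀ j)) < ε := fun j =>
    lt_of_le_of_lt (le_ciSup (f := fun j => fabs (mulVec q A j - pe (p₀ j)))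
      (Set.finite_range _).bddAbove j) hp₀
  -- improve it so that each component error is < ε and < 1
  choose r hr1 hr2 using fun j => exists_good (mulVec q A j - pe (p₀ j)) (hcomp j)
  set p : Fin n → Polynomial F := fun j => p₀ j + r j with hp
  set δ : Fin n → LaurentSeries F := fun j => mulVec q A j - pe (p j) with hδ
  have hδeq : ∀ j, δ j = (mulVec q A j - pe (p₀ j)) - pe (r j) := by
    intro j
    simp only [hδ, hp, map_add]
    ring
  have hδε : ∀ j, fabs (δ j) < ε := fun j => (hδeq j) ▸ hr1 j
  have hδ1 : ∀ j, fabs (δ j) < 1 := fun j => (hδeq j) ▸ hr2 j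
  -- the correction vector
  have hgne : pe (q i₀) ≠ 0 := pe_ne_zero hq0
  set c : Fin n → LaurentSeries F := fun j => δ j / pe (q i₀) with hc
  have hcabs : ∀ j, fabs (c j) = fabs (δ j) * (pabs (q i₀))⁻¹ := by
    intro j
    simp only [hc, div_eq_mul_inv, fabs_mul, fabs_inv, fabs_pe]
  have hpinv_pos : 0 < (pabs (q i₀))⁻¹ := by positivity
  have hcball : ∀ j, fabs (c j) < ε * (Fintype.card F : ℝ) ^ (-(N : ℤ) + 1) := by
    intro j
    rw [hcabs]
    have hzpos : (0 : ℝ) < (Fintype.card F : ℝ) ^ ((N : ℤ) - 1) :=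
      zpow_pos (cardF_pos (F := F)) _
    have h1' : (pabs (q i₀))⁻¹ ≤ ((Fintype.card F : ℝ) ^ ((N : ℤ) - 1))⁻¹ :=
      inv_anti₀ hzpos hqlow
    calc fabs (δ j) * (pabs (q i₀))⁻¹ < ε * (pabs (q i₀))⁻¹ :=
          mul_lt_mul_of_pos_right (hδε j) hpinv_pos
      _ ≤ ε * ((Fintype.card F : ℝ) ^ ((N : ℤ) - 1))⁻¹ :=
          mul_le_mul_of_nonneg_left h1' (le_of_lt hε)
      _ = ε * (Fintype.card F : ℝ) ^ (-(N : ℤ) + 1) := by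
          rw [← zpow_neg, show -((N : ℤ) - 1) = -(N : ℤ) + 1 by ring]
  have hc1 : ∀ j, fabs (c j) < 1 := by
    intro j
    rw [hcabs]
    calc fabs (δ j) * (pabs (q i₀))⁻¹ ≤ fabs (δ j) * 1 :=
          mul_le_mul_of_nonneg_left (inv_le_one_of_one_le₀ h1pabs) (fabs_nonneg _)
      _ = fabs (δ j) := mul_one _
      _ < 1 := hδ1 j
  -- the nearby matrix B
  set B : Fin m → Fin n → LaurentSeries F :=
    fun i j => if i = i₀ then A i j - c j else A i j with hB
  have hBU : B ∈ U F m n := by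
    intro i j
    by_cases h : i = i₀
    · subst h
      simp only [hB, if_pos rfl]
      exact lt_of_le_of_lt (fabs_sub_le _ _) (max_lt (hAU i j) (hc1 j))
    · simpa [hB, h] using hAU i j
  have hmulB : ∀ j, mulVec q B j = pe (p j) := by
    intro j
    have hstep : ∀ i, pe (q i) * B i j = pe (q i) * A i j - (if i = i₀ then δ j else 0) := by
      intro i
      by_cases h : i = i₀
      · subst h
        simp only [hB, if_pos rfl, mul_sub]
        congr 1
        rw [hc]
        rw [mul_comm, div_mul_cancel₀ _ hgne]
        simp
      · simp [hB, h]
    calc mulVec q B j = ∑ i, (pe (q i) * A i j - (if i = i₀ then δ j else 0)) :=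
          Finset.sum_congr rfl (fun i _ => hstep i)
      _ = mulVec q A j - δ j := by
          rw [Finset.sum_sub_distrib, Finset.sum_ite_eq' Finset.univ i₀ (fun _ => δ j)]
          simp [mulVec]
      _ = pe (p j) := by
          simp only [hδ]
          exact sub_sub_cancel _ _
  have hBH : B ∈ Hqp q p := ⟨hBU, funext hmulB⟩
  have hmem : B ∈ ⋃ p : Fin n → Polynomial F, Hqp q p := Set.mem_iUnion.mpr ⟨p, hBH⟩
  have hbound_pos : 0 < ε * (Fintype.card F : ℝ) ^ (-(N : ℤ) + 1) := by
    have := cardF_pos (F := F)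
    positivity
  refine lt_of_le_of_lt (Metric.infDist_le_dist_of_mem hmem) ?_
  rw [dist_pi_lt_iff hbound_pos]
  intro i
  rw [dist_pi_lt_iff hbound_pos]
  intro j
  rw [ldist_eq]
  by_cases h : i = i₀
  · subst h
    simp only [hB, if_pos rfl]
    rw [sub_sub_cancel]
    exact hcball j
  · simp only [hB, if_neg h, sub_self, fabs_zero]
    exact hbound_pos

end FFapprox
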